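/- Let Ω ⊂ ℝ³ be a bounded convex open set and c > 0, λ a continuous nontrivial causal signal. Suppose u(x,t) = Σ_{j=1}^{M} a_j λ(t − c⁻¹|x − s_j|)/(4π|x − s_j|) with distinct s_j ∈ Ω and a_j > 0, and suppose sampling points z₁, …, z_{N_z} ∈ Ω (distinct) and constants c(z_l) ∈ ℝ satisfy Σ_l c(z_l) λ(t − c⁻¹|x − z_l|)/(4π|x − z_l|) = u(x,t) for all x ∈ ∂Ω and t ∈ ℝ. Then {s₁,…,s_M} ⊆ {z₁,…,z_{N_z}}, and c(z_l) = a_j whenever z_l = s_j while c(z_l) = 0 whenever z_l ∉ {s₁,…,s_M}. -/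

import Mathlib

open Real

section AuxiliaryLemmas

open Finset Metric Bornology


local notation "E" => EuclideanSpace ℝ (Fin 3)
local notation "⟪" x ", " y "⟫" => @inner ℝ _ _ x y

/-- Causal independence: shifted copies of a causal nontrivial signal with
distinct delays are linearly independent. -/
theorem lemA {α : Type*} [DecidableEq α] (lam : ℝ → ℝ)
    (hcausal : ∀ t < 0, lam t = 0) (hnt : ∃ t, lam t ≠ 0) :
    ∀ (P : Finset α) (delay β : α → ℝ), Set.InjOn delay P →
      (∀ t, ∑ p ∈ P, β p * lam (t - delay p) = 0) → ∀ p ∈ P, β p = 0 := by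
  set S : Set ℝ := {t | lam t ≠ 0} with hS
  have hSne : S.Nonempty := hnt
  have hSbdd : BddBelow S := ⟨0, fun t ht => by
    by_contra h; exact ht (hcausal t (lt_of_not_ge h))⟩
  set T : ℝ := sInf S with hT
  have hzero : ∀ t' < T, lam t' = 0 := by
    intro t' ht'
    by_contra h
    exact absurd (csInf_le hSbdd h) (not_le.mpr ht')
  have hex : ∀ ε > 0, ∃ t' ∈ S, t' < T + ε := by
    intro ε hε
    have : sInf S < T + ε := by linarith [le_refl T]
    exact (csInf_lt_iff hSbdd hSne).mp this
  intro P
  induction P using Finset.strongInduction with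
  | _ P IH =>
    intro delay β hinj hsum p hp
    have hPne : P.Nonempty := ⟨p, hp⟩
    obtain ⟨p₀, hp₀, hmin⟩ := P.exists_min_image delay hPne
    -- a positive gap δ below all other delays
    have hgap : ∃ δ > 0, ∀ q ∈ P.erase p₀, delay p₀ + δ ≤ delay q := by
      rcases (P.erase p₀).eq_empty_or_nonempty with he | hne
      · exact ⟨1, one_pos, fun q hq => by simp [he] at hq⟩
      · obtain ⟨q₀, hq₀, hq₀min⟩ := (P.erase p₀).exists_min_image delay hne
        refine ⟨delay q₀ - delay p₀, ?_, fun q hq => by linarith [hq₀min q hq]⟩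
        have hq₀P : q₀ ∈ P := mem_of_mem_erase hq₀
        have hne' : q₀ ≠ p₀ := ne_of_mem_erase hq₀
        have h1 : delay p₀ ≤ delay q₀ := hmin q₀ hq₀P
        have h2 : delay p₀ ≠ delay q₀ := fun h => hne' (hinj hq₀P hp₀ h.symm)
        linarith [lt_of_le_of_ne h1 h2]
    obtain ⟨δ, hδ, hδle⟩ := hgap
    -- β p₀ = 0
    have hb0 : β p₀ = 0 := by
      obtain ⟨t', ht'S, ht'lt⟩ := hex δ hδ
      have key := hsum (t' + delay p₀)
      rw [← Finset.add_sum_erase _ _ hp₀] at key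
      have hrest : ∀ q ∈ P.erase p₀, β q * lam (t' + delay p₀ - delay q) = 0 := by
        intro q hq
        have : t' + delay p₀ - delay q < T := by
          have := hδle q hq; linarith
        rw [hzero _ this, mul_zero]
      rw [Finset.sum_eq_zero hrest, add_zero] at key
      simp only [add_sub_cancel_right] at key
      exact (mul_eq_zero.mp key).resolve_right ht'S
    -- remaining sum vanishes, apply induction
    have hsum' : ∀ t, ∑ q ∈ P.erase p₀, β q * lam (t - delay q) = 0 := by
      intro t
      have key := hsum t
      rw [← Finset.add_sum_erase _ _ hp₀, hb0, zero_mul, zero_add] at key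
      exact key
    rcases eq_or_ne p p₀ with h | h
    · rw [h]; exact hb0
    · exact IH (P.erase p₀) (erase_ssubset hp₀) delay β
        (hinj.mono (by simp [Finset.coe_subset, Finset.erase_subset]))
        hsum' p (mem_erase.mpr ⟨h, hp⟩)

lemma interior_union_empty {X : Type*} [TopologicalSpace X] {s t : Set X}
    (hs : IsClosed s) (hsi : interior s = ∅) (hti : interior t = ∅) :
    interior (s ∪ t) = ∅ := by
  by_contra h
  obtain ⟨x, hx⟩ := Set.nonempty_iff_ne_empty.mpr h
  have h1 : interior (s ∪ t) \ s ⊆ interior t := by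
    intro a ha
    refine mem_interior.mpr ⟨interior (s ∪ t) \ s, ?_, (isOpen_interior.sdiff hs), ha⟩
    intro b hb
    rcases interior_subset hb.1 with h' | h'
    · exact absurd h' hb.2
    · exact h'
  rw [hti] at h1
  have h2 : interior (s ∪ t) ⊆ s := fun a ha => by
    by_contra hns; exact h1 ⟨ha, hns⟩
  have h3 : interior (s ∪ t) ⊆ interior s := interior_maximal h2 isOpen_interior
  rw [hsi] at h3
  exact h3 hx

lemma hyperplane_interior_empty {v : E} (hv : v ≠ 0) (r : ℝ) :
    interior {x : E | ⟪v, x⟫ = r} = ∅ := by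
  by_contra h
  obtain ⟨x, hx⟩ := Set.nonempty_iff_ne_empty.mpr h
  obtain ⟨ε, hε, hball⟩ := Metric.isOpen_iff.mp isOpen_interior x hx
  have hvn : (0:ℝ) < ‖v‖ := norm_pos_iff.mpr hv
  set y := x + (ε / (2 * ‖v‖)) • v with hy
  have hyball : y ∈ ball x ε := by
    rw [mem_ball, dist_eq_norm, hy]
    have : x + (ε / (2 * ‖v‖)) • v - x = (ε / (2 * ‖v‖)) • v := by abel
    rw [this, norm_smul, Real.norm_eq_abs, abs_of_pos (by positivity)]
    have hne : ‖v‖ ≠ 0 := ne_of_gt hvn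
    have h2 : ε / (2 * ‖v‖) * ‖v‖ = ε / 2 := by
      field_simp
    rw [h2]; linarith
  have h1 : ⟪v, x⟫ = r := (interior_subset hx : x ∈ {x : E | ⟪v, x⟫ = r})
  have h2 : ⟪v, y⟫ = r := (interior_subset (hball hyball) : y ∈ {x : E | ⟪v, x⟫ = r})
  rw [hy, inner_add_right, real_inner_smul_right, h1] at h2
  have : (ε / (2 * ‖v‖)) * ⟪v, v⟫ = 0 := by linarith
  rw [real_inner_self_eq_norm_sq] at this
  have : (ε / (2 * ‖v‖)) * ‖v‖^2 > 0 := by positivity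
  linarith

example : True := trivial

theorem geomHyp (Ω : Set E) (hΩo : IsOpen Ω) (hΩc : Convex ℝ Ω)
    (hΩb : IsBounded Ω) (hne : Ω.Nonempty)
    {ι : Type} [Fintype ι] (v : ι → E) (r : ι → ℝ) (hv : ∀ i, v i ≠ 0)
    (hmeets : ∀ i, ∃ w ∈ Ω, ⟪v i, w⟫ = r i) :
    ∃ x ∈ frontier Ω, ∀ i, ⟪v i, x⟫ ≠ r i := by
  classical
  set H : ι → Set E := fun i => {x : E | ⟪v i, x⟫ = r i} with hH
  have hHc : ∀ i, IsClosed (H i) :=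
    fun i => isClosed_eq (continuous_const.inner continuous_id) continuous_const
  have hHi : ∀ i, interior (H i) = ∅ := fun i => hyperplane_interior_empty (hv i) (r i)
  -- a point y ∈ Ω avoiding all hyperplanes
  have hbadint : ∀ F : Finset ι, interior (⋃ i ∈ F, H i) = ∅ := by
    intro F
    induction F using Finset.induction with
    | empty => simp
    | @insert i F' hnotmem ih =>
      rw [Finset.set_biUnion_insert]
      exact interior_union_empty (hHc i) (hHi i) ih
  have hy : ∃ y ∈ Ω, ∀ i, ⟪v i, y⟫ ≠ r i := by
    by_contra h
    push_neg at h
    have hsub : Ω ⊆ ⋃ i ∈ Finset.univ, H i := by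
      intro x hx
      obtain ⟨i, hi⟩ := h x hx
      exact Set.mem_biUnion (Finset.mem_univ i) hi
    obtain ⟨y₀, hy₀⟩ := hne
    have : y₀ ∈ interior (⋃ i ∈ Finset.univ, H i) :=
      interior_maximal hsub hΩo hy₀
    rw [hbadint] at this
    exact this
  obtain ⟨y, hyΩ, hy⟩ := hy
  obtain ⟨r₀, hr₀, hball⟩ := Metric.isOpen_iff.mp hΩo y hyΩ
  obtain ⟨R, hR⟩ := hΩb.closure.subset_ball y
  -- exit point of the ray from y in direction u
  have hexit : ∀ u : E, ‖u‖ = 1 → ∃ t, r₀/2 ≤ t ∧ t ≤ R ∧ y + t • u ∈ frontier Ω := by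
    intro u hu
    set A : Set ℝ := {t | 0 ≤ t ∧ y + t • u ∈ closure Ω} with hA
    have hAne : A.Nonempty := ⟨0, le_refl 0, by simpa using subset_closure hyΩ⟩
    have hAbdd : BddAbove A := by
      refine ⟨R, fun t ht => ?_⟩
      have := hR ht.2
      rw [mem_ball, dist_eq_norm] at this
      have h1 : y + t • u - y = t • u := by abel
      rw [h1, norm_smul, Real.norm_eq_abs, hu, mul_one, abs_of_nonneg ht.1] at this
      linarith
    have hAcl : IsClosed A := by
      have : A = (Set.Ici (0:ℝ)) ∩ (fun t : ℝ => y + t • u) ⁻¹' (closure Ω) := by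
        ext t; simp [hA, Set.mem_Ici]
      rw [this]
      exact isClosed_Ici.inter (isClosed_closure.preimage
        (continuous_const.add (continuous_id.smul continuous_const)))
    set t₀ := sSup A with ht₀
    have ht₀A : t₀ ∈ A := hAcl.csSup_mem hAne hAbdd
    have hhalf : r₀/2 ∈ A := by
      constructor
      · positivity
      · apply subset_closure
        apply hball
        rw [mem_ball, dist_eq_norm]
        have h1 : y + (r₀/2) • u - y = (r₀/2) • u := by abel
        rw [h1, norm_smul, Real.norm_eq_abs, hu, mul_one, abs_of_nonneg (by positivity)]
        linarith
    have hlow : r₀/2 ≤ t₀ := le_csSup hAbdd hhalf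
    have hhigh : t₀ ≤ R := by
      have := hR ht₀A.2
      rw [mem_ball, dist_eq_norm] at this
      have h1 : y + t₀ • u - y = t₀ • u := by abel
      rw [h1, norm_smul, Real.norm_eq_abs, hu, mul_one, abs_of_nonneg ht₀A.1] at this
      linarith
    refine ⟨t₀, hlow, hhigh, ?_⟩
    rw [hΩo.frontier_eq]
    refine ⟨ht₀A.2, ?_⟩
    intro hmem
    obtain ⟨ε, hε, hball'⟩ := Metric.isOpen_iff.mp hΩo _ hmem
    have : t₀ + ε/2 ∈ A := by
      constructor
      · linarith [ht₀A.1]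
      · apply subset_closure
        apply hball'
        rw [mem_ball, dist_eq_norm]
        have h1 : y + (t₀ + ε/2) • u - (y + t₀ • u) = (ε/2) • u := by
          rw [add_smul]; abel
        rw [h1, norm_smul, Real.norm_eq_abs, hu, mul_one, abs_of_nonneg (by positivity)]
        linarith
    have := le_csSup hAbdd this
    linarith
  -- suppose every frontier point lies on some hyperplane
  by_contra hcon
  push_neg at hcon
  -- Baire category on the unit sphere
  set Sph : Set E := Metric.sphere (0:E) 1 with hSph
  have hSphcl : IsClosed Sph := Metric.isClosed_sphere
  haveI : CompleteSpace ↥Sph := hSphcl.completeSpace_coe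
  haveI : Nonempty ↥Sph := ⟨⟨EuclideanSpace.single 0 1, by
    simp [hSph, EuclideanSpace.norm_single]⟩⟩
  set D : ι → Set (ℝ × E) := fun i =>
    {q | q.1 ∈ Set.Icc (r₀/2) R ∧ q.2 ∈ Sph ∧ y + q.1 • q.2 ∈ frontier Ω ∧
      ⟪v i, y + q.1 • q.2⟫ = r i} with hD
  have hmapcont : Continuous (fun q : ℝ × E => y + q.1 • q.2) :=
    continuous_const.add (continuous_fst.smul continuous_snd)
  have hDcl : ∀ i, IsClosed (D i) := by
    intro i
    have : D i = (Set.Icc (r₀/2) R ×ˢ Sph) ∩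
        ((fun q : ℝ × E => y + q.1 • q.2) ⁻¹' frontier Ω) ∩
        ((fun q : ℝ × E => y + q.1 • q.2) ⁻¹' {x | ⟪v i, x⟫ = r i}) := by
      ext q
      simp only [hD, Set.mem_setOf_eq, Set.mem_inter_iff, Set.mem_prod, Set.mem_preimage]
      tauto
    rw [this]
    exact ((isClosed_Icc.prod hSphcl).inter
      (isClosed_frontier.preimage hmapcont)).inter
      ((isClosed_eq (continuous_const.inner continuous_id) continuous_const).preimage hmapcont)
  have hDcpt : ∀ i, IsCompact (D i) := by
    intro i
    apply Metric.isCompact_of_isClosed_isBounded (hDcl i)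
    apply IsBounded.subset ((Metric.isBounded_Icc (r₀/2) R).prod Metric.isBounded_sphere)
    intro q hq
    exact ⟨hq.1, hq.2.1⟩
  set C : ι → Set ↥Sph := fun i => (Subtype.val) ⁻¹' (Prod.snd '' D i) with hC
  have hCcl : ∀ i, IsClosed (C i) := by
    intro i
    exact (((hDcpt i).image continuous_snd).isClosed).preimage continuous_subtype_val
  have hcover : ⋃ i, C i = Set.univ := by
    rw [Set.eq_univ_iff_forall]
    rintro ⟨u, hu⟩
    have hu1 : ‖u‖ = 1 := by rwa [hSph, mem_sphere_zero_iff_norm] at hu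
    obtain ⟨t, ht1, ht2, htfr⟩ := hexit u hu1
    obtain ⟨i, hi⟩ := hcon _ htfr
    refine Set.mem_iUnion.mpr ⟨i, ?_⟩
    exact ⟨(t, u), ⟨⟨ht1, ht2⟩, hu, htfr, hi⟩, rfl⟩
  obtain ⟨i₀, u₀', hu₀'⟩ := nonempty_interior_of_iUnion_of_closed hCcl hcover
  obtain ⟨V, hVsub, hVopen, hu₀V⟩ := mem_interior.mp hu₀'
  obtain ⟨W, hWopen, hWV⟩ := isOpen_induced_iff.mp hVopen
  obtain ⟨u₀, hu₀def⟩ : ∃ u : E, u = (u₀' : E) := ⟨_, rfl⟩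
  have hu₀W : u₀ ∈ W := by
    have : u₀' ∈ Subtype.val ⁻¹' W := hWV ▸ hu₀V
    rw [hu₀def]; exact this
  have hu₀n : ‖u₀‖ = 1 := by rw [hu₀def]; exact mem_sphere_zero_iff_norm.mp u₀'.2
  -- extract the witness for u₀'
  have hu₀C : u₀' ∈ C i₀ := interior_subset hu₀'
  obtain ⟨⟨t₀, u₀e⟩, hq₀, hq₀e⟩ := hu₀C
  simp only at hq₀e
  rw [hq₀e, ← hu₀def] at hq₀
  obtain ⟨ht₀I, -, hb₀fr, hb₀H⟩ := hq₀
  simp only at ht₀I hb₀fr hb₀H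
  obtain ⟨b₀, hb₀def⟩ : ∃ b : E, b = y + t₀ • u₀ := ⟨_, rfl⟩
  rw [← hb₀def] at hb₀fr hb₀H
  have ht₀pos : 0 < t₀ := lt_of_lt_of_le (by positivity) ht₀I.1
  obtain ⟨w, hwΩ, hwH⟩ := hmeets i₀
  have hyH : ⟪v i₀, y⟫ ≠ r i₀ := hy i₀
  -- the normalization map
  have hb₀sub : b₀ - y = t₀ • u₀ := by rw [hb₀def]; abel
  have hb₀norm : ‖b₀ - y‖ = t₀ := by
    rw [hb₀sub, norm_smul, Real.norm_eq_abs, hu₀n, mul_one, abs_of_pos ht₀pos]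
  have hb₀ney : b₀ ≠ y := by
    intro h
    rw [h] at hb₀H
    exact hyH hb₀H
  have hgb₀ : ‖b₀ - y‖⁻¹ • (b₀ - y) = u₀ := by
    rw [hb₀norm, hb₀sub, smul_smul, inv_mul_cancel₀ (ne_of_gt ht₀pos), one_smul]
  have hgc : ContinuousAt (fun x : E => ‖x - y‖⁻¹ • (x - y)) b₀ := by
    have h1 : ContinuousAt (fun x : E => ‖x - y‖) b₀ :=
      (continuous_norm.comp (continuous_id.sub continuous_const)).continuousAt
    have h2 : ContinuousAt (fun x : E => ‖x - y‖⁻¹) b₀ :=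
      h1.inv₀ (by rw [hb₀norm]; exact ne_of_gt ht₀pos)
    exact h2.smul ((continuous_id.sub continuous_const).continuousAt)
  have hWnhds : W ∈ nhds u₀ := hWopen.mem_nhds hu₀W
  have hpre : (fun x : E => ‖x - y‖⁻¹ • (x - y)) ⁻¹' W ∈ nhds b₀ := by
    apply hgc.preimage_mem_nhds
    simp only [hgb₀]
    exact hWnhds
  obtain ⟨δ, hδ, hballδ⟩ := Metric.mem_nhds_iff.mp hpre
  -- choose a point zz on the open segment from w to b₀, close to b₀
  have hθex : ∃ θ : ℝ, 0 < θ ∧ θ < 1 ∧ (1-θ) * ‖w - b₀‖ < δ := by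
    have hNnn : 0 ≤ ‖w - b₀‖ := norm_nonneg _
    set N : ℝ := ‖w - b₀‖ with hN
    have hmle : min (1/2) (δ/(N+1)) ≤ 1/2 := min_le_left _ _
    have hmle2 : min (1/2) (δ/(N+1)) ≤ δ/(N+1) := min_le_right _ _
    have hmpos : 0 < min (1/2) (δ/(N+1)) := lt_min (by norm_num) (by positivity)
    refine ⟨1 - min (1/2) (δ/(N+1)), by linarith, by linarith, ?_⟩
    have h2 : (1 - (1 - min (1/2) (δ/(N+1)))) * N ≤ δ/(N+1) * N := by
      have h0 : 1 - (1 - min (1/2) (δ/(N+1))) = min (1/2) (δ/(N+1)) := by ring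
      rw [h0]
      exact mul_le_mul_of_nonneg_right hmle2 hNnn
    have h3 : δ/(N+1) * N < δ := by
      rw [div_mul_eq_mul_div, div_lt_iff₀ (by positivity)]
      nlinarith
    linarith
  obtain ⟨θ, hθ0, hθ1, hθδ⟩ := hθex
  obtain ⟨zz, hzzdef⟩ : ∃ q : E, q = (1 - θ) • w + θ • b₀ := ⟨_, rfl⟩
  have hzzΩ : zz ∈ Ω := by
    have hseg : openSegment ℝ w b₀ ⊆ interior Ω := by
      apply hΩc.openSegment_interior_closure_subset_interior
      · rw [hΩo.interior_eq]; exact hwΩ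
      · rw [hΩo.frontier_eq] at hb₀fr; exact hb₀fr.1
    have hmem : zz ∈ openSegment ℝ w b₀ :=
      ⟨1 - θ, θ, by linarith, hθ0, by ring, hzzdef.symm⟩
    have := hseg hmem
    rwa [hΩo.interior_eq] at this
  have hzzH : ⟪v i₀, zz⟫ = r i₀ := by
    rw [hzzdef, inner_add_right, real_inner_smul_right, real_inner_smul_right, hwH, hb₀H]
    ring
  have hzzney : zz ≠ y := by
    intro h; rw [h] at hzzH; exact hyH hzzH
  have hzzclose : dist zz b₀ < δ := by
    rw [dist_eq_norm]
    have h4 : zz - b₀ = (1 - θ) • (w - b₀) := by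
      rw [hzzdef]; module
    rw [h4, norm_smul, Real.norm_eq_abs, abs_of_pos (by linarith)]
    exact hθδ
  obtain ⟨uz, huzdef⟩ : ∃ u : E, u = ‖zz - y‖⁻¹ • (zz - y) := ⟨_, rfl⟩
  have hzzn : (0:ℝ) < ‖zz - y‖ := by
    rw [norm_pos_iff, sub_ne_zero]; exact hzzney
  have huzn : ‖uz‖ = 1 := by
    rw [huzdef, norm_smul, Real.norm_eq_abs, abs_inv, abs_of_pos hzzn]
    exact inv_mul_cancel₀ (ne_of_gt hzzn)
  have huzW : uz ∈ W := by
    have := hballδ hzzclose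
    rw [Set.mem_preimage] at this
    rw [huzdef]; exact this
  have hzzon : zz = y + ‖zz - y‖ • uz := by
    rw [huzdef, smul_smul, mul_inv_cancel₀ (ne_of_gt hzzn), one_smul]
    abel
  -- uz lies in C i₀
  have huzC : (⟨uz, mem_sphere_zero_iff_norm.mpr huzn⟩ : ↥Sph) ∈ C i₀ := by
    apply hVsub
    rw [← hWV]
    exact huzW
  obtain ⟨⟨t₁, u₁e⟩, hq₁, hq₁e⟩ := huzC
  simp only at hq₁e
  rw [hq₁e] at hq₁
  obtain ⟨ht₁I, -, hb₁fr, hb₁H⟩ := hq₁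
  simp only at ht₁I hb₁fr hb₁H
  -- two points on the same ray in the hyperplane
  have hzzH' : ⟪v i₀, y + ‖zz - y‖ • uz⟫ = r i₀ := by rw [← hzzon]; exact hzzH
  rcases eq_or_ne t₁ ‖zz - y‖ with heq | hne'
  · rw [heq, ← hzzon] at hb₁fr
    rw [hΩo.frontier_eq] at hb₁fr
    exact hb₁fr.2 hzzΩ
  · rw [inner_add_right, real_inner_smul_right] at hb₁H hzzH'
    have hinner : ⟪v i₀, uz⟫ = 0 := by
      have h1 : (t₁ - ‖zz - y‖) * ⟪v i₀, uz⟫ = 0 := by linarith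
      rcases mul_eq_zero.mp h1 with h | h
      · exact absurd (sub_eq_zero.mp h) hne'
      · exact h
    rw [hinner, mul_zero, add_zero] at hb₁H
    exact hyH hb₁H

/-- There is a boundary point from which all points of `P` have distinct distances. -/
theorem geomInj (Ω : Set E) (hΩo : IsOpen Ω) (hΩc : Convex ℝ Ω)
    (hΩb : IsBounded Ω) (hne : Ω.Nonempty) (P : Finset E) (hP : ∀ p ∈ P, p ∈ Ω) :
    ∃ x ∈ frontier Ω, ∀ p ∈ P, ∀ q ∈ P, ‖x - p‖ = ‖x - q‖ → p = q := by
  classical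
  set Pairs : Finset (E × E) := (P ×ˢ P).filter (fun pq => pq.1 ≠ pq.2) with hPairs
  have key := geomHyp Ω hΩo hΩc hΩb hne (ι := ↥Pairs)
    (v := fun i => (i : E × E).2 - (i : E × E).1)
    (r := fun i => (‖(i : E × E).2‖^2 - ‖(i : E × E).1‖^2)/2)
    (fun i => by
      have h := (Finset.mem_filter.mp i.2).2
      exact sub_ne_zero.mpr (Ne.symm h))
    (fun i => by
      obtain ⟨⟨p, q⟩, hi⟩ := i
      rw [hPairs, Finset.mem_filter, Finset.mem_product] at hi
      refine ⟨(1/2 : ℝ) • p + (1/2 : ℝ) • q,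
        hΩc (hP p hi.1.1) (hP q hi.1.2) (by norm_num) (by norm_num) (by norm_num), ?_⟩
      simp only
      rw [inner_add_right, real_inner_smul_right, real_inner_smul_right,
        inner_sub_left, inner_sub_left, real_inner_self_eq_norm_sq,
        real_inner_self_eq_norm_sq, real_inner_comm p q]
      ring)
  obtain ⟨x, hxfr, hx⟩ := key
  refine ⟨x, hxfr, ?_⟩
  intro p hp q hq hnorm
  by_contra hpq
  have hmem : (p, q) ∈ Pairs := by
    rw [hPairs, Finset.mem_filter, Finset.mem_product]
    exact ⟨⟨hp, hq⟩, hpq⟩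
  have := hx ⟨(p, q), hmem⟩
  simp only at this
  apply this
  -- from ‖x - p‖ = ‖x - q‖ derive the hyperplane equation
  have h2 : ‖x - p‖^2 = ‖x - q‖^2 := by rw [hnorm]
  rw [norm_sub_sq_real, norm_sub_sq_real] at h2
  rw [inner_sub_left]
  have e1 : ⟪q, x⟫ = ⟪x, q⟫ := (real_inner_comm q x).symm
  have e2 : ⟪p, x⟫ = ⟪x, p⟫ := (real_inner_comm p x).symm
  linarith


end AuxiliaryLemmas

/-- Proposition 2.4: the MMFS expansion recovers exactly the sources. -/
theorem stmt_9 (Ω : Set (EuclideanSpace ℝ (Fin 3)))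
    (hΩo : IsOpen Ω) (hΩc : Convex ℝ Ω) (hΩb : Bornology.IsBounded Ω)
    (c : ℝ) (hc : 0 < c) (lam : ℝ → ℝ) (hlc : Continuous lam)
    (hcausal : ∀ t < 0, lam t = 0) (hnt : ∃ t, lam t ≠ 0)
    (M Nz : ℕ) (hM : 0 < M) (hNz : 0 < Nz)
    (s : Fin M → EuclideanSpace ℝ (Fin 3)) (hsΩ : ∀ j, s j ∈ Ω)
    (hsi : Function.Injective s) (a : Fin M → ℝ) (ha : ∀ j, 0 < a j)
    (z : Fin Nz → EuclideanSpace ℝ (Fin 3)) (hzΩ : ∀ l, z l ∈ Ω)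
    (hzi : Function.Injective z) (cc : Fin Nz → ℝ)
    (hfit : ∀ x ∈ frontier Ω, ∀ t : ℝ,
      ∑ l : Fin Nz, cc l * lam (t - c⁻¹ * ‖x - z l‖) / (4 * π * ‖x - z l‖) =
      ∑ j : Fin M, a j * lam (t - c⁻¹ * ‖x - s j‖) / (4 * π * ‖x - s j‖)) :
    (Set.range s ⊆ Set.range z) ∧
    (∀ l : Fin Nz, (∀ j : Fin M, z l = s j → cc l = a j) ∧
      (z l ∉ Set.range s → cc l = 0)) := by
  classical
  set P : Finset (EuclideanSpace ℝ (Fin 3)) := (Finset.univ.image s) ∪ (Finset.univ.image z) with hP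
  have hPΩ : ∀ p ∈ P, p ∈ Ω := by
    intro p hp
    rw [hP, Finset.mem_union, Finset.mem_image, Finset.mem_image] at hp
    rcases hp with ⟨j, -, rfl⟩ | ⟨l, -, rfl⟩
    · exact hsΩ j
    · exact hzΩ l
  have hne : Ω.Nonempty := ⟨s ⟨0, hM⟩, hsΩ _⟩
  obtain ⟨x, hxfr, hxinj⟩ := geomInj Ω hΩo hΩc hΩb hne P hPΩ
  have hxΩ : x ∉ Ω := by
    rw [hΩo.frontier_eq] at hxfr
    exact hxfr.2
  have hxp : ∀ p ∈ P, (0:ℝ) < ‖x - p‖ := by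
    intro p hp
    rw [norm_pos_iff, sub_ne_zero]
    intro h
    exact hxΩ (h ▸ hPΩ p hp)
  -- coefficient function
  set b : EuclideanSpace ℝ (Fin 3) → ℝ := fun p =>
    (∑ j ∈ Finset.univ.filter (fun j => s j = p), a j) -
    (∑ l ∈ Finset.univ.filter (fun l => z l = p), cc l) with hb
  -- the combined sum vanishes on the boundary
  have hsum : ∀ t : ℝ, ∑ p ∈ P,
      (b p / (4 * π * ‖x - p‖)) * lam (t - c⁻¹ * ‖x - p‖) = 0 := by
    intro t
    have hfit' := hfit x hxfr t
    set F : EuclideanSpace ℝ (Fin 3) → ℝ := fun p => lam (t - c⁻¹ * ‖x - p‖) / (4 * π * ‖x - p‖) with hF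
    have hs1 : ∑ p ∈ P, (∑ j ∈ Finset.univ.filter (fun j => s j = p), a j) * F p
        = ∑ j : Fin M, a j * F (s j) := by
      rw [← Finset.sum_fiberwise_of_maps_to (g := s) (t := P)
        (fun j _ => Finset.mem_union_left _ (Finset.mem_image_of_mem s (Finset.mem_univ j)))
        (fun j => a j * F (s j))]
      apply Finset.sum_congr rfl
      intro p _
      rw [Finset.sum_mul]
      apply Finset.sum_congr rfl
      intro j hj
      rw [(Finset.mem_filter.mp hj).2]
    have hs2 : ∑ p ∈ P, (∑ l ∈ Finset.univ.filter (fun l => z l = p), cc l) * F p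
        = ∑ l : Fin Nz, cc l * F (z l) := by
      rw [← Finset.sum_fiberwise_of_maps_to (g := z) (t := P)
        (fun l _ => Finset.mem_union_right _ (Finset.mem_image_of_mem z (Finset.mem_univ l)))
        (fun l => cc l * F (z l))]
      apply Finset.sum_congr rfl
      intro p _
      rw [Finset.sum_mul]
      apply Finset.sum_congr rfl
      intro l hl
      rw [(Finset.mem_filter.mp hl).2]
    have hcomb : ∑ p ∈ P, (b p / (4 * π * ‖x - p‖)) * lam (t - c⁻¹ * ‖x - p‖)
        = ∑ p ∈ P, b p * F p := by
      apply Finset.sum_congr rfl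
      intro p _
      rw [hF]
      simp only
      ring
    rw [hcomb]
    have hsplit : ∑ p ∈ P, b p * F p
        = (∑ p ∈ P, (∑ j ∈ Finset.univ.filter (fun j => s j = p), a j) * F p)
        - (∑ p ∈ P, (∑ l ∈ Finset.univ.filter (fun l => z l = p), cc l) * F p) := by
      rw [← Finset.sum_sub_distrib]
      apply Finset.sum_congr rfl
      intro p _
      rw [hb]
      simp only
      ring
    rw [hsplit, hs1, hs2]
    have h1 : ∑ j : Fin M, a j * F (s j)
        = ∑ j : Fin M, a j * lam (t - c⁻¹ * ‖x - s j‖) / (4 * π * ‖x - s j‖) := by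
      apply Finset.sum_congr rfl
      intro j _
      rw [hF]; simp only; ring
    have h2 : ∑ l : Fin Nz, cc l * F (z l)
        = ∑ l : Fin Nz, cc l * lam (t - c⁻¹ * ‖x - z l‖) / (4 * π * ‖x - z l‖) := by
      apply Finset.sum_congr rfl
      intro l _
      rw [hF]; simp only; ring
    rw [h1, h2, ← hfit', sub_self]
  -- all coefficients vanish
  have hbzero : ∀ p ∈ P, b p = 0 := by
    intro p hp
    have hinj : Set.InjOn (fun p => c⁻¹ * ‖x - p‖) P := by
      intro p1 hp1 p2 hp2 h
      simp only at h
      have : ‖x - p1‖ = ‖x - p2‖ := by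
        have hc' : c⁻¹ ≠ 0 := inv_ne_zero (ne_of_gt hc)
        exact mul_left_cancel₀ hc' h
      exact hxinj p1 hp1 p2 hp2 this
    have := lemA lam hcausal hnt P (fun p => c⁻¹ * ‖x - p‖)
      (fun p => b p / (4 * π * ‖x - p‖)) hinj hsum p hp
    have hden : 4 * π * ‖x - p‖ ≠ 0 := by
      have := hxp p hp
      positivity
    exact (div_eq_zero_iff.mp this).resolve_right hden
  -- evaluate at the source points
  have hsP : ∀ j, s j ∈ P := fun j =>
    Finset.mem_union_left _ (Finset.mem_image_of_mem s (Finset.mem_univ j))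
  have hzP : ∀ l, z l ∈ P := fun l =>
    Finset.mem_union_right _ (Finset.mem_image_of_mem z (Finset.mem_univ l))
  have hfs : ∀ j : Fin M, (Finset.univ.filter (fun j' => s j' = s j)) = {j} := by
    intro j
    ext j'
    simp [hsi.eq_iff]
  have hfz : ∀ l : Fin Nz, (Finset.univ.filter (fun l' => z l' = z l)) = {l} := by
    intro l
    ext l'
    simp [hzi.eq_iff]
  have hbs : ∀ j : Fin M, a j = ∑ l ∈ Finset.univ.filter (fun l => z l = s j), cc l := by
    intro j
    have := hbzero (s j) (hsP j)
    rw [hb] at this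
    simp only at this
    rw [hfs j, Finset.sum_singleton] at this
    linarith
  constructor
  · rintro _ ⟨j, rfl⟩
    by_contra hnot
    have hempty : (Finset.univ.filter (fun l => z l = s j)) = ∅ := by
      ext l
      simp only [Finset.mem_filter, Finset.mem_univ, true_and, Finset.notMem_empty,
        iff_false]
      intro h
      exact hnot ⟨l, h⟩
    have := hbs j
    rw [hempty, Finset.sum_empty] at this
    exact absurd this (ne_of_gt (ha j))
  · intro l
    constructor
    · intro j hzl
      have hfilter : (Finset.univ.filter (fun l' => z l' = s j)) = {l} := by
        rw [← hzl]
        exact hfz l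
      have := hbs j
      rw [hfilter, Finset.sum_singleton] at this
      exact this.symm
    · intro hnot
      have := hbzero (z l) (hzP l)
      rw [hb] at this
      simp only at this
      have hempty : (Finset.univ.filter (fun j => s j = z l)) = ∅ := by
        ext j
        simp only [Finset.mem_filter, Finset.mem_univ, true_and, Finset.notMem_empty,
          iff_false]
        intro h
        exact hnot ⟨j, h⟩
      rw [hempty, Finset.sum_empty, hfz l, Finset.sum_singleton] at this
      linarith
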